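/- Let B be a discrete valuation ring with normalized additive valuation v, and let χ : B^n → B^n be a B-linear endomorphism. Then the length of the B-module coker(χ) = B^n / im(χ) equals v(det χ), with the convention that both sides are infinite when det χ = 0. In particular, if det χ ≠ 0 then length_B(coker χ) = v(det χ). -/

import Mathlib

open Order

section OrderLemmas

lemma myKrullDim_fin (k : ℕ) : Order.krullDim (Fin (k+1)) = k := by
  apply le_antisymm
  · apply iSup_le
    intro p
    have key : ∀ i : Fin (p.length + 1), (i : ℕ) ≤ ((p i : Fin (k+1)) : ℕ) := by
      intro i
      induction i using Fin.induction with
      | zero => exact Nat.zero_le _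
      | succ i ih =>
        have h : ((p i.castSucc : Fin (k+1)) : ℕ) < ((p i.succ : Fin (k+1)) : ℕ) := p.step i
        simp only [Fin.coe_castSucc] at ih
        simp only [Fin.val_succ]
        omega
    have h1 := key (Fin.last p.length)
    have h2 : ((p (Fin.last p.length) : Fin (k+1)) : ℕ) ≤ k := Fin.is_le _
    have : p.length ≤ k := by simpa [Fin.last] using le_trans h1 h2
    exact_mod_cast Nat.cast_le.mpr this
  · have := Order.LTSeries.length_le_krullDim
      (LTSeries.mk k (fun i => (i : Fin (k+1))) strictMono_id)
    simpa using this

lemma myHeight_add_one_le {α : Type*} [Preorder α] {x y : α} (h : x < y) :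
    Order.height x + 1 ≤ Order.height y := by
  by_cases hy : Order.height y = ⊤
  · simp [hy]
  · have hx : Order.height x < ⊤ := lt_of_le_of_lt (height_mono h.le) (lt_top_iff_ne_top.2 hy)
    exact Order.add_one_le_of_lt (height_strictMono h hx)

lemma myLen_le_prod {α β : Type*} [Preorder α] [Preorder β] (p : LTSeries (α × β)) :
    (p.length : ℕ∞) ≤ Order.height p.last.1 + Order.height p.last.2 := by
  induction' hn : p.length with n ih generalizing p
  · simp
  · have h1 : p.eraseLast.length = n := by simp [hn]
    have h2 := ih p.eraseLast h1
    have hrel : p.eraseLast.last < p.last := p.eraseLast_last_rel_last (by omega)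
    have step : Order.height p.eraseLast.last.1 + Order.height p.eraseLast.last.2 + 1 ≤
        Order.height p.last.1 + Order.height p.last.2 := by
      rcases Prod.lt_iff.1 hrel with ⟨h, h'⟩ | ⟨h, h'⟩
      · calc Order.height p.eraseLast.last.1 + Order.height p.eraseLast.last.2 + 1
            = (Order.height p.eraseLast.last.1 + 1) + Order.height p.eraseLast.last.2 := by ring
          _ ≤ Order.height p.last.1 + Order.height p.last.2 :=
            add_le_add (myHeight_add_one_le h) (height_mono h')
      · calc Order.height p.eraseLast.last.1 + Order.height p.eraseLast.last.2 + 1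
            = Order.height p.eraseLast.last.1 + (Order.height p.eraseLast.last.2 + 1) := by ring
          _ ≤ Order.height p.last.1 + Order.height p.last.2 :=
            add_le_add (height_mono h) (myHeight_add_one_le h')
    calc ((n + 1 : ℕ) : ℕ∞) = (n : ℕ∞) + 1 := by push_cast; ring
      _ ≤ (Order.height p.eraseLast.last.1 + Order.height p.eraseLast.last.2) + 1 :=
          add_le_add_left h2 1
      _ ≤ _ := step

lemma myExists_series {α : Type*} [Preorder α] {k : ℕ}
    (h : (k : WithBot ℕ∞) ≤ Order.krullDim α) : ∃ p : LTSeries α, k ≤ p.length := by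
  by_contra hc
  push_neg at hc
  rcases Nat.eq_zero_or_pos k with rfl | hk
  · obtain ⟨p⟩ : Nonempty (LTSeries α) := by
      by_contra he
      rw [not_nonempty_iff] at he
      have : Order.krullDim α = ⊥ := by
        simp only [Order.krullDim]
        exact WithBot.ciSup_empty _
      rw [this] at h
      exact absurd h (by simp)
    exact absurd (hc p) (by omega)
  · have hle : Order.krullDim α ≤ ((k - 1 : ℕ) : WithBot ℕ∞) := by
      apply iSup_le
      intro p
      have hcp := hc p
      have hle2 : p.length ≤ k - 1 := by omega
      exact_mod_cast hle2
    have : (k : WithBot ℕ∞) ≤ ((k - 1 : ℕ) : WithBot ℕ∞) := le_trans h hle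
    have : (k : ℕ) ≤ k - 1 := by exact_mod_cast this
    omega

lemma myKrullDim_prod {α β : Type*} [Preorder α] [Preorder β] {ka kb : ℕ}
    (ha : Order.krullDim α = (ka : ℕ)) (hb : Order.krullDim β = (kb : ℕ)) :
    Order.krullDim (α × β) = ((ka + kb : ℕ) : WithBot ℕ∞) := by
  apply le_antisymm
  · apply iSup_le
    intro p
    have h1 := myLen_le_prod p
    have h2 : Order.height p.last.1 + Order.height p.last.2 ≤ (ka + kb : ℕ∞) := by
      have ha' : Order.height p.last.1 ≤ (ka : ℕ∞) := by
        have := Order.height_le_krullDim p.last.1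
        rw [ha] at this
        exact_mod_cast this
      have hb' : Order.height p.last.2 ≤ (kb : ℕ∞) := by
        have := Order.height_le_krullDim p.last.2
        rw [hb] at this
        exact_mod_cast this
      calc _ ≤ (ka : ℕ∞) + (kb : ℕ∞) := add_le_add ha' hb'
        _ = ((ka + kb : ℕ) : ℕ∞) := by push_cast; ring
    have : (p.length : ℕ∞) ≤ ((ka + kb : ℕ) : ℕ∞) := le_trans h1 h2
    exact_mod_cast this
  · obtain ⟨p, hp⟩ := myExists_series (α := α) (k := ka) (by rw [ha])
    obtain ⟨q, hq⟩ := myExists_series (α := β) (k := kb) (by rw [hb])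
    have m1 : StrictMono (fun x : α => (x, q.head)) := fun x y hxy => by
      exact Prod.mk_lt_mk_iff_left.mpr hxy
    have m2 : StrictMono (fun y : β => (p.last, y)) := fun x y hxy => by
      exact Prod.mk_lt_mk_iff_right.mpr hxy
    have hconn : (p.map _ m1).last = (q.map _ m2).head := by
      simp [LTSeries.last_map, LTSeries.head_map]
    have hlen := Order.LTSeries.length_le_krullDim (((p.map _ m1)).smash ((q.map _ m2)) hconn)
    have hlen2 : ((ka + kb : ℕ) : WithBot ℕ∞) ≤
        ((((p.map _ m1)).smash ((q.map _ m2)) hconn).length : WithBot ℕ∞) := by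
      have heq : (((p.map _ m1)).smash ((q.map _ m2)) hconn).length = p.length + q.length := by
        simp [RelSeries.smash]
      rw [heq]
      have : ka + kb ≤ p.length + q.length := by omega
      exact_mod_cast this
    exact le_trans hlen2 hlen

end OrderLemmas

section SubmoduleProd

variable {R M N : Type*} [CommRing R] [AddCommGroup M] [Module R M] [AddCommGroup N] [Module R N]

lemma myStrictMono_prod :
    StrictMono (fun pq : Submodule R M × Submodule R N => pq.1.prod pq.2) := by
  intro ⟨p, q⟩ ⟨p', q'⟩ h
  rw [Prod.lt_iff] at h
  constructor
  · rcases h with ⟨h1, h2⟩ | ⟨h1, h2⟩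
    · exact Submodule.prod_mono h1.le h2
    · exact Submodule.prod_mono h1 h2.le
  · intro hle
    have hp : p' ≤ p := by
      intro x hx
      have : (x, (0 : N)) ∈ p'.prod q' := ⟨hx, q'.zero_mem⟩
      exact (hle this).1
    have hq : q' ≤ q := by
      intro y hy
      have : ((0 : M), y) ∈ p'.prod q' := ⟨p'.zero_mem, hy⟩
      exact (hle this).2
    rcases h with ⟨h1, h2⟩ | ⟨h1, h2⟩
    · exact absurd (le_antisymm h1.le hp) h1.ne
    · exact absurd (le_antisymm h2.le hq) h2.ne

lemma myStrictMono_unprod :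
    StrictMono (fun P : Submodule R (M × N) =>
      ((P.comap (LinearMap.inl R M N), P.map (LinearMap.snd R M N)) :
        Submodule R M × Submodule R N)) := by
  intro P Q h
  have hmono : (P.comap (LinearMap.inl R M N), P.map (LinearMap.snd R M N)) ≤
      (Q.comap (LinearMap.inl R M N), Q.map (LinearMap.snd R M N)) :=
    ⟨Submodule.comap_mono h.le, Submodule.map_mono h.le⟩
  refine lt_of_le_of_ne hmono ?_
  intro heq
  have h1 : P.comap (LinearMap.inl R M N) = Q.comap (LinearMap.inl R M N) :=
    congrArg Prod.fst heq
  have h2 : P.map (LinearMap.snd R M N) = Q.map (LinearMap.snd R M N) :=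
    congrArg Prod.snd heq
  apply h.ne
  apply le_antisymm h.le
  intro x hx
  have : x.2 ∈ Q.map (LinearMap.snd R M N) := ⟨x, hx, rfl⟩
  rw [← h2] at this
  obtain ⟨y, hy, hxy⟩ := this
  have hsub : x - y ∈ Q := Q.sub_mem hx (h.le hy)
  have hy2 : y.2 = x.2 := hxy
  have hrep : x - y = LinearMap.inl R M N ((x - y).1) := by
    rw [LinearMap.inl_apply]
    exact Prod.ext rfl (by simp [hy2])
  have hm1 : (x - y).1 ∈ Q.comap (LinearMap.inl R M N) := by
    rw [Submodule.mem_comap, ← hrep]; exact hsub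
  rw [← h1] at hm1
  have hm2 : x - y ∈ P := by rw [hrep]; exact hm1
  have := P.add_mem hm2 hy
  simpa using this

lemma myKrullDim_submodule_prod :
    Order.krullDim (Submodule R (M × N)) =
      Order.krullDim (Submodule R M × Submodule R N) :=
  le_antisymm (Order.krullDim_le_of_strictMono _ myStrictMono_unprod)
    (Order.krullDim_le_of_strictMono _ myStrictMono_prod)

end SubmoduleProd

section DVR

variable {B : Type*} [CommRing B] [IsDomain B] [IsDiscreteValuationRing B]

lemma myAddVal_isUnit {u : B} (h : IsUnit u) : IsDiscreteValuationRing.addVal B u = 0 := by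
  obtain ⟨v, rfl⟩ := h
  obtain ⟨ϖ, hϖ⟩ := IsDiscreteValuationRing.exists_irreducible B
  have := IsDiscreteValuationRing.addVal_def (v : B) v hϖ 0 (by simp)
  simpa using this

lemma myAddVal_prod {ι : Type*} (s : Finset ι) (g : ι → B) :
    IsDiscreteValuationRing.addVal B (∏ i ∈ s, g i) =
      ∑ i ∈ s, IsDiscreteValuationRing.addVal B (g i) := by
  classical
  induction s using Finset.cons_induction with
  | empty => simp [IsDiscreteValuationRing.addVal_one]
  | cons i s his ih =>
    rw [Finset.prod_cons, Finset.sum_cons, IsDiscreteValuationRing.addVal_mul, ih]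

lemma myKrullDim_top {M : Type*} [AddCommGroup M] [Module B M] (x : M)
    (hx : ∀ b : B, b ≠ 0 → b • x ≠ 0) :
    Order.krullDim (Submodule B M) = ⊤ := by
  obtain ⟨ϖ, hϖ⟩ := IsDiscreteValuationRing.exists_irreducible B
  set N : ℕ → Submodule B M := fun k => Submodule.span B {ϖ ^ k • x} with hN
  have hanti : StrictAnti N := by
    apply strictAnti_nat_of_succ_lt
    intro k
    constructor
    · rw [hN]
      apply Submodule.span_le.2
      intro z hz
      rw [Set.mem_singleton_iff] at hz
      subst hz
      have : ϖ ^ (k + 1) • x = ϖ • (ϖ ^ k • x) := by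
        rw [← mul_smul, pow_succ, mul_comm]
      rw [this]
      exact Submodule.smul_mem _ _ (Submodule.mem_span_singleton_self _)
    · intro hle
      have : ϖ ^ k • x ∈ Submodule.span B {ϖ ^ (k + 1) • x} :=
        hle (Submodule.mem_span_singleton_self _)
      obtain ⟨c, hc⟩ := Submodule.mem_span_singleton.1 this
      rw [← mul_smul] at hc
      have h0 : (c * ϖ ^ (k + 1) - ϖ ^ k) • x = 0 := by
        rw [sub_smul, hc, sub_self]
      have hne : c * ϖ ^ (k + 1) - ϖ ^ k = 0 := by
        by_contra hne
        exact hx _ hne h0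
      have : ϖ ^ k * (c * ϖ - 1) = 0 := by linear_combination hne
      rcases mul_eq_zero.1 this with h | h
      · exact pow_ne_zero k hϖ.ne_zero h
      · have : c * ϖ = 1 := sub_eq_zero.1 h
        exact hϖ.not_isUnit (IsUnit.of_mul_eq_one _ (by rw [mul_comm]; exact this))
  have : InfiniteDimensionalOrder (Submodule B M) := by
    constructor
    intro n
    refine ⟨LTSeries.mk n (fun i => N (n - i)) ?_, rfl⟩
    intro i j hij
    apply hanti
    have hi : (i : ℕ) < (j : ℕ) := hij
    have hj : (j : ℕ) ≤ n := Nat.lt_succ_iff.1 j.2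
    omega
  exact Order.krullDim_eq_top

lemma myKrullDim_quot_span {a : B} (ha : a ≠ 0) {k : ℕ}
    (hval : IsDiscreteValuationRing.addVal B a = k) :
    Order.krullDim (Submodule B (B ⧸ (Ideal.span {a} : Ideal B))) = (k : ℕ) := by
  obtain ⟨ϖ, hϖ⟩ := IsDiscreteValuationRing.exists_irreducible B
  obtain ⟨m, u, hu⟩ := IsDiscreteValuationRing.eq_unit_mul_pow_irreducible ha hϖ
  have hm : m = k := by
    have := IsDiscreteValuationRing.addVal_def a u hϖ m hu
    rw [hval] at this
    exact_mod_cast this.symm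
  subst hm
  have e1 := (Submodule.comapMkQRelIso (Ideal.span {a} : Ideal B))
  rw [Order.krullDim_eq_of_orderIso e1]
  have hϖ0 : ϖ ≠ 0 := hϖ.ne_zero
  have hdvd : ∀ j : Fin (m + 1), (Ideal.span {a} : Ideal B) ≤ Ideal.span {ϖ ^ (m - (j : ℕ))} := by
    intro j
    rw [Ideal.span_singleton_le_span_singleton, hu]
    exact Dvd.dvd.mul_left (pow_dvd_pow ϖ (Nat.sub_le _ _)) _
  set F : Fin (m + 1) → {p' : Submodule B B // (Ideal.span {a} : Ideal B) ≤ p'} :=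
    fun j => ⟨Ideal.span {ϖ ^ (m - (j : ℕ))}, hdvd j⟩ with hF
  have hmono : StrictMono F := by
    intro i j hij
    have hi : (i : ℕ) < (j : ℕ) := hij
    have hjm : (j : ℕ) ≤ m := Nat.lt_succ_iff.1 j.2
    constructor
    · show (Ideal.span {ϖ ^ (m - (i : ℕ))} : Ideal B) ≤ Ideal.span {ϖ ^ (m - (j : ℕ))}
      rw [Ideal.span_singleton_le_span_singleton]
      exact pow_dvd_pow ϖ (by omega)
    · intro hle
      have : (Ideal.span {ϖ ^ (m - (j : ℕ))} : Ideal B) ≤ Ideal.span {ϖ ^ (m - (i : ℕ))} := hle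
      rw [Ideal.span_singleton_le_span_singleton] at this
      have := (pow_dvd_pow_iff hϖ0 hϖ.not_isUnit).1 this
      omega
  have hsurj : Function.Surjective F := by
    rintro ⟨J, hJ⟩
    have hJne : J ≠ ⊥ := by
      intro hbot
      rw [hbot, le_bot_iff, Ideal.span_singleton_eq_bot] at hJ
      exact ha hJ
    obtain ⟨l, hl⟩ := IsDiscreteValuationRing.ideal_eq_span_pow_irreducible hJne hϖ
    have hla : ϖ ^ l ∣ a := by
      rw [← Ideal.span_singleton_le_span_singleton, ← hl]
      exact hJ
    have hlm : l ≤ m := by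
      rw [hu] at hla
      have : ϖ ^ l ∣ ϖ ^ m := Units.dvd_mul_left.1 hla
      exact (pow_dvd_pow_iff hϖ0 hϖ.not_isUnit).1 this
    refine ⟨⟨m - l, by omega⟩, ?_⟩
    rw [hF]
    apply Subtype.ext
    show Ideal.span {ϖ ^ (m - (m - l))} = J
    rw [hl, Nat.sub_sub_self hlm]
  change Order.krullDim {p' : Submodule B B // (Ideal.span {a} : Ideal B) ≤ p'} = _
  rw [← Order.krullDim_eq_of_orderIso (StrictMono.orderIsoOfSurjective F hmono hsurj)]
  exact myKrullDim_fin m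

end DVR

section Pi

/-- linear equiv splitting a Pi over `Fin (n+1)` -/
def myPiFinSucc {R : Type*} [Semiring R] {n : ℕ} (φ : Fin (n + 1) → Type*)
    [∀ i, AddCommMonoid (φ i)] [∀ i, Module R (φ i)] :
    (∀ i, φ i) ≃ₗ[R] φ 0 × (∀ i : Fin n, φ i.succ) where
  toFun f := (f 0, fun i => f i.succ)
  map_add' _ _ := rfl
  map_smul' _ _ := rfl
  invFun p := Fin.cons p.1 p.2
  left_inv f := by
    funext i
    refine Fin.cases ?_ (fun j => ?_) i
    · simp
    · simp
  right_inv p := by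
    refine Prod.ext ?_ ?_
    · simp
    · funext j; simp

lemma mySpan_single_eq_pi {B : Type*} [CommRing B] {n : ℕ} (c : Fin n → B) :
    Submodule.span B (Set.range fun j => Pi.single j (c j)) =
      Submodule.pi Set.univ (fun j => (Ideal.span {c j} : Ideal B)) := by
  apply le_antisymm
  · rw [Submodule.span_le]
    rintro _ ⟨j, rfl⟩
    intro i _
    rcases eq_or_ne j i with rfl | hne
    · simpa using Ideal.mem_span_singleton_self _
    · simp [Pi.single_eq_of_ne (Ne.symm hne), hne]
  · intro x hx
    have hrep : x = ∑ j, Pi.single j (x j) := by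
      ext i
      simp [Finset.sum_apply, Pi.single_apply]
    rw [hrep]
    apply Submodule.sum_mem
    intro j _
    have hxj : x j ∈ (Ideal.span {c j} : Ideal B) := hx j (Set.mem_univ j)
    obtain ⟨d, hd⟩ := Ideal.mem_span_singleton'.1 hxj
    have : (Pi.single j (x j) : Fin n → B) = d • (Pi.single j (c j) : Fin n → B) := by
      rw [← hd]
      ext i
      rcases eq_or_ne j i with rfl | hne
      · simp
      · simp [Pi.single_eq_of_ne (Ne.symm hne)]
    rw [this]
    exact Submodule.smul_mem _ _ (Submodule.subset_span ⟨j, rfl⟩)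

lemma myKrullDim_pi {B : Type*} [CommRing B] [IsDomain B] [IsDiscreteValuationRing B] :
    ∀ (n : ℕ) (c : Fin n → B) (k : Fin n → ℕ),
    (∀ j, IsDiscreteValuationRing.addVal B (c j) = k j) → (∀ j, c j ≠ 0) →
    Order.krullDim (Submodule B (∀ j, B ⧸ (Ideal.span {c j} : Ideal B))) =
      ((∑ j, k j : ℕ) : WithBot ℕ∞) := by
  intro n
  induction n with
  | zero =>
    intro c k _ _
    have : Subsingleton (∀ j : Fin 0, B ⧸ (Ideal.span {c j} : Ideal B)) :=
      ⟨fun a b => funext fun i => Fin.elim0 i⟩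
    have hu : Unique (Submodule B (∀ j : Fin 0, B ⧸ (Ideal.span {c j} : Ideal B))) := by
      refine ⟨⟨⊥⟩, fun p => ?_⟩
      ext y
      simp [Subsingleton.elim y 0]
    rw [Order.krullDim_eq_zero_of_unique]
    simp
  | succ n ih =>
    intro c k hval hc
    have e := myPiFinSucc (R := B) (fun j : Fin (n+1) => B ⧸ (Ideal.span {c j} : Ideal B))
    rw [Order.krullDim_eq_of_orderIso (Submodule.orderIsoMapComap e)]
    rw [myKrullDim_submodule_prod]
    have h0 := myKrullDim_quot_span (hc 0) (hval 0)
    have hrest := ih (fun j => c j.succ) (fun j => k j.succ) (fun j => hval j.succ)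
      (fun j => hc j.succ)
    rw [myKrullDim_prod h0 hrest]
    norm_num [Fin.sum_univ_succ]

end Pi

section DetLemma

lemma myInj_of_det_ne_zero {B : Type*} [CommRing B] [IsDomain B] {n : ℕ}
    (χ : (Fin n → B) →ₗ[B] (Fin n → B)) (h : LinearMap.det χ ≠ 0) :
    Function.Injective χ := by
  classical
  rw [← LinearMap.ker_eq_bot]
  by_contra hk
  obtain ⟨y, hy, hy0⟩ := (Submodule.ne_bot_iff _).1 hk
  apply h
  rw [← LinearMap.det_toMatrix']
  rw [← Matrix.exists_mulVec_eq_zero_iff]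
  refine ⟨y, hy0, ?_⟩
  rw [← Matrix.toLin'_apply, Matrix.toLin'_toMatrix']
  exact hy

end DetLemma

/-- The length of a module, i.e. the Krull dimension of its lattice of submodules
(the supremum of the lengths of chains of submodules), valued in `WithBot ℕ∞`. -/
noncomputable def moduleLength (B : Type*) [CommRing B] (C : Type*) [AddCommGroup C]
    [Module B C] : WithBot ℕ∞ :=
  Order.krullDim (Submodule B C)

/-- Let `B` be a discrete valuation ring with normalized additive valuation
`v` and `χ : B^n → B^n` a `B`-linear endomorphism. Then the length of `coker χ` equals
`v(det χ)`, both sides being infinite when `det χ = 0`. -/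
theorem length_coker_eq_addVal_det (B : Type*) [CommRing B] [IsDomain B]
    [IsDiscreteValuationRing B] (n : ℕ) (χ : (Fin n → B) →ₗ[B] (Fin n → B)) :
    moduleLength B ((Fin n → B) ⧸ LinearMap.range χ) =
      ((IsDiscreteValuationRing.addVal B (LinearMap.det χ) : ℕ∞) : WithBot ℕ∞) := by
  classical
  rw [moduleLength]
  by_cases hdet : LinearMap.det χ = 0
  · -- infinite case
    rw [hdet, IsDiscreteValuationRing.addVal_zero]
    obtain ⟨v, hv0, hvM⟩ := (Matrix.exists_vecMul_eq_zero_iff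
        (M := LinearMap.toMatrix' χ)).2
      (by rw [LinearMap.det_toMatrix']; exact hdet)
    obtain ⟨i, hvi⟩ := Function.ne_iff.1 hv0
    simp only [Pi.zero_apply] at hvi
    set x : Fin n → B := Pi.single i 1 with hxdef
    have hx : ∀ b : B, b ≠ 0 →
        b • (Submodule.Quotient.mk x : (Fin n → B) ⧸ LinearMap.range χ) ≠ 0 := by
      intro b hb hz
      rw [← Submodule.Quotient.mk_smul, Submodule.Quotient.mk_eq_zero] at hz
      obtain ⟨y, hy⟩ := hz
      have h1 : dotProduct v (b • x) = 0 := by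
        rw [← hy]
        have : χ y = (LinearMap.toMatrix' χ).mulVec y := by
          rw [← Matrix.toLin'_apply, Matrix.toLin'_toMatrix']
        rw [this, Matrix.dotProduct_mulVec, hvM, zero_dotProduct]
      have h2 : dotProduct v (b • x) = v i * b := by
        simp [hxdef, dotProduct, Pi.single_apply, mul_comm]
      rw [h2] at h1
      rcases mul_eq_zero.1 h1 with h | h
      · exact hvi h
      · exact hb h
    have := myKrullDim_top (B := B) (Submodule.Quotient.mk x) hx
    rw [this]
    rfl
  · -- finite case
    have hinj := myInj_of_det_ne_zero χ hdet
    obtain ⟨m, snf⟩ := Submodule.smithNormalForm (Pi.basisFun B (Fin n)) (LinearMap.range χ)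
    obtain ⟨bM, bN, f, a, hsnf⟩ := snf
    -- m = n
    have hmn : m = n := by
      have e := Module.Basis.indexEquiv bN
        ((Pi.basisFun B (Fin n)).map (LinearEquiv.ofInjective χ hinj))
      simpa using Fintype.card_congr e
    subst hmn
    have hbij : Function.Bijective f := (Finite.injective_iff_bijective).1 f.injective
    set σ : Fin m ≃ Fin m := Equiv.ofBijective f hbij with hσ
    have hσf : ∀ i, σ i = f i := fun i => rfl
    -- a i ≠ 0
    have ha : ∀ i, a i ≠ 0 := by
      intro i hia
      have h := hsnf i
      rw [hia, zero_smul] at h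
      exact (bN.ne_zero i) (by exact_mod_cast Subtype.ext h)
    -- range χ as a span
    have hrange : LinearMap.range χ =
        Submodule.span B (Set.range fun i => a i • bM (f i)) := by
      have h1 : LinearMap.range χ =
          Submodule.map (LinearMap.range χ).subtype ⊤ := by
        rw [Submodule.map_subtype_top]
      have h2 : ((LinearMap.range χ).subtype ∘ bN) = fun i => a i • bM (f i) :=
        funext fun i => hsnf i
      rw [h1, ← Module.Basis.span_eq bN, Submodule.map_span, ← Set.range_comp, h2]
    -- the model map T
    set T : (Fin m → B) →ₗ[B] (Fin m → B) :=
      (Module.Basis.constr bM ℕ) (fun i => a i • bM (f i)) with hT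
    have hTrange : LinearMap.range T = LinearMap.range χ := by
      rw [hT, Module.Basis.constr_range, ← hrange]
    -- determinant of T
    have hsign : ((Equiv.Perm.sign σ : ℤ) : B) * LinearMap.det T = ∏ i, a i := by
      have hmat : (LinearMap.toMatrix bM bM T).submatrix σ id = Matrix.diagonal a := by
        ext j i
        rw [Matrix.submatrix_apply, LinearMap.toMatrix_apply, id_eq]
        rw [hT, Module.Basis.constr_basis]
        rcases eq_or_ne i j with rfl | hne
        · simp [hσf]
        · have : f i ≠ σ j := by
            rw [hσf]; exact fun hc => hne (f.injective hc)
          simp [this, Matrix.diagonal_apply_ne' _ hne]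
      have h := Matrix.det_permute σ (LinearMap.toMatrix bM bM T)
      rw [hmat, Matrix.det_diagonal, LinearMap.det_toMatrix] at h
      exact h.symm
    have hu : IsUnit ((Equiv.Perm.sign σ : ℤ) : B) := by
      rcases Int.units_eq_one_or (Equiv.Perm.sign σ) with hs | hs <;> rw [hs]
      · simp
      · simpa using (isUnit_one (M := B)).neg
    have hdetTval : IsDiscreteValuationRing.addVal B (LinearMap.det T) =
        IsDiscreteValuationRing.addVal B (∏ i, a i) := by
      rw [← hsign, IsDiscreteValuationRing.addVal_mul, myAddVal_isUnit hu, zero_add]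
    -- T is injective
    have hdetT0 : LinearMap.det T ≠ 0 := by
      intro h0
      have : (∏ i, a i) = 0 := by rw [← hsign, h0, mul_zero]
      obtain ⟨i, _, hi⟩ := Finset.prod_eq_zero_iff.1 this
      exact ha i hi
    have hTinj := myInj_of_det_ne_zero T hdetT0
    -- relate det χ and det T
    set eχ := LinearEquiv.ofInjective χ hinj with heχ
    set eT := LinearEquiv.ofInjective T hTinj with heT
    set g : (Fin m → B) ≃ₗ[B] (Fin m → B) :=
      eT.trans ((LinearEquiv.ofEq _ _ hTrange).trans eχ.symm) with hg
    have hcomp : T = χ.comp (g : (Fin m → B) →ₗ[B] (Fin m → B)) := by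
      apply LinearMap.ext
      intro z
      simp only [LinearMap.comp_apply, LinearEquiv.coe_coe]
      have h1 : χ (g z) = (eχ (g z) : Fin m → B) :=
        (LinearEquiv.ofInjective_apply χ (g z)).symm
      have h2 : eχ (g z) = (LinearEquiv.ofEq _ _ hTrange) (eT z) := by
        rw [hg]
        simp only [LinearEquiv.trans_apply, LinearEquiv.apply_symm_apply]
      have h3 : ((LinearEquiv.ofEq _ _ hTrange) (eT z) : Fin m → B) = (eT z : Fin m → B) := rfl
      have h4 : (eT z : Fin m → B) = T z := LinearEquiv.ofInjective_apply T z
      rw [h1, h2, h3, h4]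
    have hdetchi : IsDiscreteValuationRing.addVal B (LinearMap.det χ) =
        IsDiscreteValuationRing.addVal B (∏ i, a i) := by
      have hTeq : LinearMap.det T = LinearMap.det χ *
          LinearMap.det (g : (Fin m → B) →ₗ[B] (Fin m → B)) := by
        rw [hcomp, LinearMap.det_comp]
      have hgu : IsDiscreteValuationRing.addVal B
          (LinearMap.det (g : (Fin m → B) →ₗ[B] (Fin m → B))) = 0 :=
        myAddVal_isUnit (LinearEquiv.isUnit_det' g)
      rw [← hdetTval, hTeq, IsDiscreteValuationRing.addVal_mul, hgu, add_zero]
    -- natural number values of the valuations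
    have hk : ∀ i, ∃ ki : ℕ, IsDiscreteValuationRing.addVal B (a i) = (ki : ℕ∞) := by
      intro i
      have : IsDiscreteValuationRing.addVal B (a i) ≠ ⊤ := fun htop =>
        ha i (IsDiscreteValuationRing.addVal_eq_top_iff.1 htop)
      obtain ⟨ki, hki⟩ := WithTop.ne_top_iff_exists.1 this
      exact ⟨ki, hki.symm⟩
    choose k hkk using hk
    have hprod : IsDiscreteValuationRing.addVal B (∏ i, a i) = ((∑ i, k i : ℕ) : ℕ∞) := by
      rw [myAddVal_prod]
      simp_rw [hkk]
      push_cast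
      rfl
    -- identify the cokernel with a product of cyclic modules
    set c : Fin m → B := fun j => a (σ.symm j) with hc
    set E := bM.equivFun with hE
    have hmap : Submodule.map (E : (Fin m → B) →ₗ[B] (Fin m → B)) (LinearMap.range χ) =
        Submodule.pi Set.univ (fun j => (Ideal.span {c j} : Ideal B)) := by
      rw [hrange, Submodule.map_span, ← Set.range_comp]
      have hfun : ((E : (Fin m → B) →ₗ[B] (Fin m → B)) ∘ fun i => a i • bM (f i)) =
          (fun j => Pi.single j (c j)) ∘ σ := by
        funext i
        have h1 : (E : (Fin m → B) →ₗ[B] (Fin m → B)) (a i • bM (f i)) =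
            a i • E (bM (f i)) := by
          simp
        have h2 : E (bM (f i)) = fun j' => if f i = j' then (1 : B) else 0 := by
          funext j'
          rw [hE]
          exact bM.equivFun_self (f i) j'
        have h3 : a i • (fun j' => if f i = j' then (1 : B) else 0) =
            Pi.single (f i) (a i) := by
          funext j'
          rcases eq_or_ne (f i) j' with rfl | hne
          · simp
          · simp [hne, Pi.single_eq_of_ne (Ne.symm hne)]
        have h4 : ((fun j => Pi.single j (c j)) ∘ σ) i = Pi.single (f i) (a i) := by
          simp only [Function.comp_apply, hc, Equiv.symm_apply_apply]
          rfl
        rw [Function.comp_apply, h1, h2, h3, h4]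
      rw [hfun, Function.Surjective.range_comp σ.surjective, mySpan_single_eq_pi]
    have e2 := Submodule.Quotient.equiv (LinearMap.range χ)
      (Submodule.pi Set.univ (fun j => (Ideal.span {c j} : Ideal B))) E hmap
    have e3 := Submodule.quotientPi (fun j : Fin m => (Ideal.span {c j} : Ideal B))
    rw [Order.krullDim_eq_of_orderIso (Submodule.orderIsoMapComap (e2.trans e3))]
    rw [myKrullDim_pi m c (fun j => k (σ.symm j)) (fun j => hkk (σ.symm j))
      (fun j => ha (σ.symm j))]
    rw [hdetchi, hprod]
    have hsum : (∑ j, k (σ.symm j)) = ∑ i, k i := Equiv.sum_comp σ.symm k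
    rw [hsum]
    exact_mod_cast rfl
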